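/- Let (E,d) be a complete separable metric space, let μ be a probability measure on E with finite second moment, and let α, β ∈ Π(μ,μ) be couplings of μ with itself, with disintegrations (α_x)_{x∈E} and (β_x)_{x∈E} with respect to the first coordinate. Suppose there exists C > 0 such that for μ-a.e. x the measure β_x satisfies the Talagrand inequality W₂²(η, β_x) ≤ C·H(η|β_x) for every probability measure η on E. Then for every Lipschitz function ξ: E → ℝ one has ∫_E |∫ ξ dα_x − ∫ ξ dβ_x|² dμ(x) ≤ Lip(ξ)²·C·H(α|β). -/

import Mathlib

open MeasureTheory ProbabilityTheory
open scoped Classical ENNReal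

/-- Relative entropy (KL divergence) of `α` with respect to `β`, valued in `EReal`. -/
noncomputable def relEnt {Ω : Type*} [MeasurableSpace Ω] (α β : Measure Ω) : EReal :=
  if α ≪ β ∧ Integrable (fun ω => Real.log ((α.rnDeriv β) ω).toReal) α
  then ((∫ ω, Real.log ((α.rnDeriv β) ω).toReal ∂α : ℝ) : EReal)
  else ⊤

/-- Squared 2-Wasserstein distance: infimum over couplings of the integrated squared
distance. -/
noncomputable def W2sq {X : Type*} [MeasurableSpace X] [PseudoMetricSpace X]
    (μ ν : Measure X) : ℝ≥0∞ :=
  ⨅ γ ∈ {γ : Measure (X × X) | γ.fst = μ ∧ γ.snd = ν},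
    ∫⁻ p, ENNReal.ofReal (dist p.1 p.2 ^ 2) ∂γ

open Set

lemma my_compProd_withDensity {A B : Type*} [MeasurableSpace A] [MeasurableSpace B]
    (μ : Measure A) [SFinite μ] (η : Kernel A B) [IsSFiniteKernel η]
    {f : A → B → ℝ≥0∞} (hf : Measurable (Function.uncurry f))
    [IsSFiniteKernel (η.withDensity f)] :
    μ.compProd (η.withDensity f) = (μ.compProd η).withDensity (fun p => f p.1 p.2) := by
  ext s hs
  rw [Measure.compProd_apply hs, withDensity_apply _ hs,
    ← lintegral_indicator hs (fun p => f p.1 p.2), Measure.lintegral_compProd (Measurable.indicator (f := fun p => f p.1 p.2) (by exact hf) hs)]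
  refine lintegral_congr fun a => ?_
  rw [Kernel.withDensity_apply _ hf,
    withDensity_apply _ (measurable_prodMk_left hs),
    ← lintegral_indicator (measurable_prodMk_left hs) _]
  refine lintegral_congr fun b => ?_
  by_cases h : (a, b) ∈ s
  · rw [indicator_of_mem h, indicator_of_mem (by exact h)]
  · rw [indicator_of_notMem h, indicator_of_notMem (by exact h)]

lemma my_rnDeriv_compProd {A : Type*} [MeasurableSpace A] [MeasurableSpace.CountablyGenerated A]
    (μ : Measure A) [IsFiniteMeasure μ] (κ η : Kernel A A) [IsFiniteKernel κ] [IsFiniteKernel η] :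
    (μ.compProd κ).rnDeriv (μ.compProd η)
      =ᵐ[μ.compProd η] fun p => Kernel.rnDeriv κ η p.1 p.2 := by
  refine (Measure.eq_rnDeriv (s := μ.compProd (κ.singularPart η))
    (Kernel.measurable_rnDeriv κ η) ?_ ?_).symm
  · refine ⟨(Kernel.mutuallySingularSet κ η)ᶜ,
      (Kernel.measurableSet_mutuallySingularSet κ η).compl, ?_, ?_⟩
    · rw [Measure.compProd_apply (Kernel.measurableSet_mutuallySingularSet κ η).compl]
      have : ∀ a : A, (κ.singularPart η) a (Prod.mk a ⁻¹' (Kernel.mutuallySingularSet κ η)ᶜ) = 0 := by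
        intro a
        have : Prod.mk a ⁻¹' (Kernel.mutuallySingularSet κ η)ᶜ
            = (Kernel.mutuallySingularSetSlice κ η a)ᶜ := rfl
        rw [this]
        exact Kernel.singularPart_compl_mutuallySingularSetSlice κ η a
      exact (lintegral_congr this).trans lintegral_zero
    · rw [compl_compl, Measure.compProd_apply (Kernel.measurableSet_mutuallySingularSet κ η)]
      have : ∀ a : A, η a (Prod.mk a ⁻¹' (Kernel.mutuallySingularSet κ η)) = 0 := by
        intro a
        have : Prod.mk a ⁻¹' (Kernel.mutuallySingularSet κ η)
            = Kernel.mutuallySingularSetSlice κ η a := rfl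
        rw [this]
        exact Kernel.measure_mutuallySingularSetSlice κ η a
      exact (lintegral_congr this).trans lintegral_zero
  · conv_lhs => rw [← Kernel.rnDeriv_add_singularPart κ η]
    rw [Measure.compProd_add_right,
      my_compProd_withDensity μ η (Kernel.measurable_rnDeriv κ η), add_comm]

lemma my_integrable_dist {X : Type*} [MetricSpace X] [MeasurableSpace X] [OpensMeasurableSpace X]
    (η : Measure X) [IsProbabilityMeasure η] (o : X)
    (hm : ∫⁻ y, ENNReal.ofReal (dist y o ^ 2) ∂η ≠ ⊤) :
    Integrable (fun y => dist y o) η := by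
  refine ⟨(continuous_id.dist continuous_const).aestronglyMeasurable, ?_⟩
  rw [hasFiniteIntegral_iff_norm]
  have hb : ∀ y : X, ENNReal.ofReal ‖dist y o‖ ≤ 1 + ENNReal.ofReal (dist y o ^ 2) := by
    intro y
    rw [Real.norm_eq_abs, abs_of_nonneg dist_nonneg]
    rcases le_or_gt (dist y o) 1 with h | h
    · exact le_add_right (by simpa using ENNReal.ofReal_le_ofReal h)
    · refine le_add_left (ENNReal.ofReal_le_ofReal ?_)
      nlinarith [dist_nonneg (x := y) (y := o)]
  calc ∫⁻ y, ENNReal.ofReal ‖dist y o‖ ∂η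
      ≤ ∫⁻ y, (1 + ENNReal.ofReal (dist y o ^ 2)) ∂η := lintegral_mono hb
    _ = 1 + ∫⁻ y, ENNReal.ofReal (dist y o ^ 2) ∂η := by
        rw [lintegral_add_left measurable_const]; simp
    _ < ⊤ := by
        rw [ENNReal.add_lt_top]
        exact ⟨ENNReal.one_lt_top, lt_top_iff_ne_top.mpr hm⟩

lemma my_integrable_lip {X : Type*} [MetricSpace X] [MeasurableSpace X] [OpensMeasurableSpace X]
    (η : Measure X) [IsProbabilityMeasure η] (o : X)
    (hm : ∫⁻ y, ENNReal.ofReal (dist y o ^ 2) ∂η ≠ ⊤)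
    {K : NNReal} {ξ : X → ℝ} (hξ : LipschitzWith K ξ) :
    Integrable ξ η := by
  have hg : Integrable (fun y => |ξ o| + K * dist y o) η :=
    (integrable_const (|ξ o|)).add ((my_integrable_dist η o hm).const_mul _)
  refine Integrable.mono' hg hξ.continuous.aestronglyMeasurable
    (Filter.Eventually.of_forall fun y => ?_)
  rw [Real.norm_eq_abs]
  have h1 : |ξ y - ξ o| ≤ K * dist y o := by
    have := hξ.dist_le_mul y o
    rwa [Real.dist_eq] at this
  have h2 := abs_sub_abs_le_abs_sub (ξ y) (ξ o)
  linarith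

lemma my_couple_bound {X : Type*} [MetricSpace X] [MeasurableSpace X] [BorelSpace X]
    [TopologicalSpace.SeparableSpace X]
    (η ν : Measure X) [IsProbabilityMeasure η] [IsProbabilityMeasure ν] (o : X)
    (hη : ∫⁻ y, ENNReal.ofReal (dist y o ^ 2) ∂η ≠ ⊤)
    (hν : ∫⁻ y, ENNReal.ofReal (dist y o ^ 2) ∂ν ≠ ⊤)
    (K : NNReal) (ξ : X → ℝ) (hξ : LipschitzWith K ξ) :
    ENNReal.ofReal ((∫ z, ξ z ∂η - ∫ z, ξ z ∂ν) ^ 2) ≤ (K : ℝ≥0∞) ^ 2 * W2sq η ν := by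
  haveI : SecondCountableTopology X := UniformSpace.secondCountable_of_separable X
  have hne : Nonempty X := by
    by_contra h
    have h1 : η Set.univ = 1 := measure_univ
    rw [Set.univ_eq_empty_iff.mpr (not_nonempty_iff.mp h), measure_empty] at h1
    exact zero_ne_one h1
  rcases eq_or_ne K 0 with hK | hK
  · have hconst : ∀ x, ξ x = ξ hne.some := by
      intro x
      have := hξ.dist_le_mul x hne.some
      rw [hK] at this
      simpa using dist_le_zero.mp (by simpa using this)
    have he : ∫ z, ξ z ∂η = ξ hne.some := by
      rw [show ξ = fun _ => ξ hne.some from funext hconst]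
      simp
    have hv : ∫ z, ξ z ∂ν = ξ hne.some := by
      rw [show ξ = fun _ => ξ hne.some from funext hconst]
      simp
    rw [he, hv]
    simp
  · have hK2 : ((K : ℝ≥0∞) ^ 2) ≠ 0 := by simpa using hK
    have hK2t : ((K : ℝ≥0∞) ^ 2) ≠ ⊤ := by simp
    set A := ENNReal.ofReal ((∫ z, ξ z ∂η - ∫ z, ξ z ∂ν) ^ 2) with hA
    have key : ∀ γ : Measure (X × X), γ.fst = η → γ.snd = ν →
        A ≤ (K : ℝ≥0∞) ^ 2 * ∫⁻ p, ENNReal.ofReal (dist p.1 p.2 ^ 2) ∂γ := by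
      intro γ h1 h2
      haveI : IsProbabilityMeasure γ := ⟨by rw [← Measure.fst_univ, h1]; exact measure_univ⟩
      have hγ1 : γ.map Prod.fst = η := h1
      have hγ2 : γ.map Prod.snd = ν := h2
      have hint1 : Integrable ξ η := my_integrable_lip η o hη hξ
      have hint2 : Integrable ξ ν := my_integrable_lip ν o hν hξ
      have hf1 : Integrable (fun p : X × X => ξ p.1) γ :=
        (integrable_map_measure (hγ1 ▸ hint1.aestronglyMeasurable)
          measurable_fst.aemeasurable).mp (by rwa [hγ1])
      have hf2 : Integrable (fun p : X × X => ξ p.2) γ :=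
        (integrable_map_measure (hγ2 ▸ hint2.aestronglyMeasurable)
          measurable_snd.aemeasurable).mp (by rwa [hγ2])
      have hΔ : ∫ z, ξ z ∂η - ∫ z, ξ z ∂ν = ∫ p, (ξ p.1 - ξ p.2) ∂γ := by
        rw [integral_sub hf1 hf2]
        congr 1
        · rw [← hγ1, integral_map measurable_fst.aemeasurable
            (hγ1 ▸ hint1.aestronglyMeasurable)]
        · rw [← hγ2, integral_map measurable_snd.aemeasurable
            (hγ2 ▸ hint2.aestronglyMeasurable)]
      set D := fun p : X × X => (K : ℝ≥0∞) * ENNReal.ofReal (dist p.1 p.2) with hD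
      have hdmeas : Measurable fun p : X × X => ENNReal.ofReal (dist p.1 p.2) :=
        continuous_dist.measurable.ennreal_ofReal
      have hDmeas : Measurable D := measurable_const.mul hdmeas
      have hstep1 : A ≤ (∫⁻ p, D p ∂γ) ^ 2 := by
        have hn : A = ((‖∫ p, (ξ p.1 - ξ p.2) ∂γ‖₊ : ℝ≥0∞)) ^ 2 := by
          rw [hA, hΔ, ← sq_abs, ENNReal.ofReal_pow (abs_nonneg _),
            ← enorm_eq_nnnorm, Real.enorm_eq_ofReal_abs]
        have h1' : ((‖∫ p, (ξ p.1 - ξ p.2) ∂γ‖₊ : ℝ≥0∞)) ≤ ∫⁻ p, D p ∂γ := by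
          refine (enorm_integral_le_lintegral_enorm _).trans (lintegral_mono fun p => ?_)
          rw [Real.enorm_eq_ofReal_abs, hD]
          have hle : |ξ p.1 - ξ p.2| ≤ (K : ℝ) * dist p.1 p.2 := by
            have := hξ.dist_le_mul p.1 p.2
            rwa [Real.dist_eq] at this
          calc ENNReal.ofReal |ξ p.1 - ξ p.2| ≤ ENNReal.ofReal ((K : ℝ) * dist p.1 p.2) :=
              ENNReal.ofReal_le_ofReal hle
            _ = (K : ℝ≥0∞) * ENNReal.ofReal (dist p.1 p.2) := by
              rw [ENNReal.ofReal_mul K.coe_nonneg, ENNReal.ofReal_coe_nnreal]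
        rw [hn]
        exact pow_le_pow_left' h1' 2
      have hCS : (∫⁻ p, D p ∂γ) ^ 2 ≤ ∫⁻ p, (D p) ^ 2 ∂γ := by
        have hconj : (2 : ℝ).HolderConjugate 2 := by constructor <;> norm_num
        have h := ENNReal.lintegral_mul_le_Lp_mul_Lq γ hconj hDmeas.aemeasurable
          (aemeasurable_const (b := (1 : ℝ≥0∞)))
        simp only [mul_one, Pi.mul_apply, ENNReal.one_rpow, lintegral_one, measure_univ,
          ENNReal.one_rpow, mul_one, ENNReal.rpow_natCast] at h
        have h' : (∫⁻ p, D p ∂γ) ≤ (∫⁻ p, (D p) ^ (2 : ℝ) ∂γ) ^ (1 / 2 : ℝ) := by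
          simpa using h
        calc (∫⁻ p, D p ∂γ) ^ 2 ≤ ((∫⁻ p, (D p) ^ (2 : ℝ) ∂γ) ^ (1 / 2 : ℝ)) ^ 2 :=
            pow_le_pow_left' h' 2
          _ = ∫⁻ p, (D p) ^ (2 : ℝ) ∂γ := by
            rw [← ENNReal.rpow_natCast (((∫⁻ p, (D p) ^ (2 : ℝ) ∂γ) ^ (1 / 2 : ℝ))) 2,
              ← ENNReal.rpow_mul]
            norm_num
          _ = ∫⁻ p, (D p) ^ 2 ∂γ := by
            refine lintegral_congr fun p => ?_
            rw [← ENNReal.rpow_natCast (D p) 2]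
            norm_num
      have hfin : ∫⁻ p, (D p) ^ 2 ∂γ
          = (K : ℝ≥0∞) ^ 2 * ∫⁻ p, ENNReal.ofReal (dist p.1 p.2 ^ 2) ∂γ := by
        have hpt : ∀ p : X × X, (D p) ^ 2
            = (K : ℝ≥0∞) ^ 2 * ENNReal.ofReal (dist p.1 p.2 ^ 2) := fun p => by
          rw [hD, mul_pow, ← ENNReal.ofReal_pow dist_nonneg]
        rw [lintegral_congr hpt,
          lintegral_const_mul _ ((continuous_dist.measurable.pow_const 2).ennreal_ofReal)]
      exact hstep1.trans (hCS.trans (le_of_eq hfin))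
    have h2 : A / (K : ℝ≥0∞) ^ 2 ≤ W2sq η ν := by
      refine le_iInf₂ fun γ hγ => ?_
      rw [ENNReal.div_le_iff_le_mul (Or.inl hK2) (Or.inl hK2t), mul_comm]
      exact key γ hγ.1 hγ.2
    calc A = (K : ℝ≥0∞) ^ 2 * (A / (K : ℝ≥0∞) ^ 2) :=
        (ENNReal.mul_div_cancel hK2 hK2t).symm
      _ ≤ (K : ℝ≥0∞) ^ 2 * W2sq η ν := mul_le_mul_right h2 _


/-- If the disintegrations `β_x` of the coupling `β ∈ Π(μ,μ)` satisfy a Talagrand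
transport inequality with constant `C`, then for every Lipschitz `ξ`,
`∫ |∫ ξ dα_x − ∫ ξ dβ_x|² dμ ≤ Lip(ξ)²·C·H(α|β)`. -/
theorem stmt3 {E : Type*} [MetricSpace E] [CompleteSpace E]
    [TopologicalSpace.SeparableSpace E] [MeasurableSpace E] [BorelSpace E]
    (μ : Measure E) [IsProbabilityMeasure μ]
    (o : E) (hmom : Integrable (fun x => dist x o ^ 2) μ)
    (α β : Measure (E × E)) [IsProbabilityMeasure α] [IsProbabilityMeasure β]
    (κα κβ : Kernel E E) (hκα : IsMarkovKernel κα) (hκβ : IsMarkovKernel κβ)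
    (hαdis : α = μ.compProd κα) (hβdis : β = μ.compProd κβ)
    (hαsnd : α.snd = μ) (hβsnd : β.snd = μ)
    (C : ℝ) (hC : 0 < C)
    (hTal : ∀ᵐ x ∂μ, ∀ η : Measure E, IsProbabilityMeasure η →
      ((W2sq η (κβ x) : ℝ≥0∞) : EReal) ≤ ((C : ℝ) : EReal) * relEnt η (κβ x))
    (K : NNReal) (ξ : E → ℝ) (hξ : LipschitzWith K ξ) :
    ((∫⁻ x, ENNReal.ofReal (((∫ z, ξ z ∂(κα x)) - ∫ z, ξ z ∂(κβ x)) ^ 2) ∂μ : ℝ≥0∞) : EReal)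
      ≤ (((K : ℝ) ^ 2 * C : ℝ) : EReal) * relEnt α β := by
  haveI : SecondCountableTopology E := UniformSpace.secondCountable_of_separable E
  haveI := hκα
  haveI := hκβ
  have hne : Nonempty E := by
    by_contra h
    have h1 : μ Set.univ = 1 := measure_univ
    rw [Set.univ_eq_empty_iff.mpr (not_nonempty_iff.mp h), measure_empty] at h1
    exact zero_ne_one h1
  -- second moment facts
  have hmomE : ∫⁻ y, ENNReal.ofReal (dist y o ^ 2) ∂μ ≠ ⊤ := by
    rw [← ofReal_integral_eq_lintegral_ofReal hmom
      (Filter.Eventually.of_forall fun y => sq_nonneg _)]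
    exact ENNReal.ofReal_ne_top
  have hmes2 : Measurable fun y : E => ENNReal.ofReal (dist y o ^ 2) :=
    ((continuous_id.dist continuous_const).measurable.pow_const 2).ennreal_ofReal
  have hmomκ : ∀ (κ : Kernel E E), IsMarkovKernel κ → (μ.compProd κ).snd = μ →
      ∀ᵐ x ∂μ, ∫⁻ y, ENNReal.ofReal (dist y o ^ 2) ∂κ x ≠ ⊤ := by
    intro κ hm hsnd
    haveI := hm
    have hsndeq : ∫⁻ p : E × E, ENNReal.ofReal (dist p.2 o ^ 2) ∂(μ.compProd κ)
        = ∫⁻ y, ENNReal.ofReal (dist y o ^ 2) ∂(μ.compProd κ).snd := by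
      rw [Measure.snd, lintegral_map hmes2 measurable_snd]
    have htot : ∫⁻ x, (∫⁻ y, ENNReal.ofReal (dist y o ^ 2) ∂κ x) ∂μ ≠ ⊤ := by
      have e1 : ∫⁻ p : E × E, ENNReal.ofReal (dist p.2 o ^ 2) ∂(μ.compProd κ)
          = ∫⁻ x, ∫⁻ y, ENNReal.ofReal (dist y o ^ 2) ∂κ x ∂μ := by
        rw [Measure.lintegral_compProd (f := fun p : E × E => ENNReal.ofReal (dist p.2 o ^ 2))
          (by exact hmes2.comp measurable_snd)]
      rw [← e1, hsndeq, hsnd]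
      exact hmomE
    have hmeas : Measurable fun x => ∫⁻ y, ENNReal.ofReal (dist y o ^ 2) ∂κ x :=
      Measurable.lintegral_kernel_prod_right (hmes2.comp measurable_snd)
    exact (ae_lt_top hmeas htot).mono fun x hx => hx.ne
  have hmomα := hmomκ κα hκα (by rw [← hαdis]; exact hαsnd)
  have hmomβ := hmomκ κβ hκβ (by rw [← hβdis]; exact hβsnd)
  -- trivial case K = 0
  rcases eq_or_ne K 0 with hK | hK
  · subst hK
    have hconst : ξ = fun _ => ξ hne.some := by
      funext x
      have := hξ.dist_le_mul x hne.some
      simpa using dist_le_zero.mp (by simpa using this)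
    have hzero : ∀ x : E, (∫ z, ξ z ∂κα x) - ∫ z, ξ z ∂κβ x = 0 := by
      intro x
      haveI : IsProbabilityMeasure (κα x) := hκα.isProbabilityMeasure x
      haveI : IsProbabilityMeasure (κβ x) := hκβ.isProbabilityMeasure x
      rw [hconst]
      simp
    simp only [hzero]
    simp
  -- case relEnt = ⊤
  by_cases hfin : α ≪ β ∧ Integrable (fun p => Real.log ((α.rnDeriv β) p).toReal) α
  swap
  · rw [relEnt, if_neg hfin, EReal.mul_top_of_pos]
    · exact le_top
    · refine EReal.coe_pos.mpr (mul_pos (pow_pos ?_ 2) hC)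
      exact_mod_cast pos_iff_ne_zero.mpr hK
  obtain ⟨hac, hint⟩ := hfin
  -- chain rule for rnDeriv
  set F : E × E → ℝ≥0∞ := fun p => Kernel.rnDeriv κα κβ p.1 p.2 with hF
  have hFmeas : Measurable F := Kernel.measurable_rnDeriv κα κβ
  have h1 : α.rnDeriv β =ᵐ[β] F := by
    rw [hαdis, hβdis]
    exact my_rnDeriv_compProd μ κα κβ
  have h1' : α.rnDeriv β =ᵐ[α] F := hac.ae_le h1
  have h2 : (fun p => Real.log ((α.rnDeriv β) p).toReal)
      =ᵐ[α] fun p => Real.log ((F p).toReal) := h1'.mono fun p hp => by dsimp only; rw [hp]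
  have hintF : Integrable (fun p => Real.log ((F p).toReal)) α := hint.congr h2
  have hrel : relEnt α β = ((∫ p, Real.log ((F p).toReal) ∂α : ℝ) : EReal) := by
    rw [relEnt, if_pos ⟨hac, hint⟩]
    exact congrArg _ (integral_congr_ae h2)
  have hintF' : Integrable (fun p => Real.log ((F p).toReal)) (μ.compProd κα) := hαdis ▸ hintF
  have hFsm : AEStronglyMeasurable (fun p => Real.log ((F p).toReal)) (μ.compProd κα) :=
    (Real.measurable_log.comp hFmeas.ennreal_toReal).aestronglyMeasurable
  have hiff := (Measure.integrable_compProd_iff hFsm).mp hintF'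
  have haeint : ∀ᵐ x ∂μ,
      Integrable (fun y => Real.log ((Kernel.rnDeriv κα κβ x y).toReal)) (κα x) := hiff.1
  set g : E → ℝ := fun x => ∫ y, Real.log ((Kernel.rnDeriv κα κβ x y).toReal) ∂κα x with hg
  have hgsm : StronglyMeasurable g :=
    StronglyMeasurable.integral_kernel_prod_right
      ((Real.measurable_log.comp hFmeas.ennreal_toReal).stronglyMeasurable)
  have hgint : Integrable g μ := by
    refine Integrable.mono' hiff.2 hgsm.aestronglyMeasurable
      (Filter.Eventually.of_forall fun x => ?_)
    exact norm_integral_le_integral_norm _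
  have hginteq : ∫ p, Real.log ((F p).toReal) ∂α = ∫ x, g x ∂μ := by
    rw [hαdis]
    exact Measure.integral_compProd hintF'
  -- a.e. absolute continuity of the disintegrations
  have hSmeas := Kernel.measurableSet_mutuallySingularSet κα κβ
  have hacx : ∀ᵐ x ∂μ, κα x ≪ κβ x := by
    have hβS : β (Kernel.mutuallySingularSet κα κβ) = 0 := by
      rw [hβdis, Measure.compProd_apply hSmeas]
      have h0 : ∀ x, κβ x (Prod.mk x ⁻¹' Kernel.mutuallySingularSet κα κβ) = 0 := fun x =>
        Kernel.measure_mutuallySingularSetSlice κα κβ x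
      exact (lintegral_congr h0).trans lintegral_zero
    have hαS : α (Kernel.mutuallySingularSet κα κβ) = 0 := hac hβS
    rw [hαdis, Measure.compProd_apply hSmeas,
      lintegral_eq_zero_iff (Kernel.measurable_kernel_prodMk_left hSmeas)] at hαS
    refine hαS.mono fun x hx => ?_
    refine (Kernel.singularPart_eq_zero_iff_absolutelyContinuous κα κβ x).mp
      ((Kernel.singularPart_eq_zero_iff_measure_eq_zero κα κβ x).mpr hx)
  -- pointwise bound
  have hpt : ∀ᵐ x ∂μ,
      ENNReal.ofReal (((∫ z, ξ z ∂κα x) - ∫ z, ξ z ∂κβ x) ^ 2)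
        ≤ ENNReal.ofReal ((K : ℝ) ^ 2 * (C * g x)) ∧ 0 ≤ C * g x := by
    filter_upwards [hacx, haeint, hTal, hmomα, hmomβ] with x hax hix htx hmα hmβ
    haveI : IsProbabilityMeasure (κα x) := hκα.isProbabilityMeasure x
    haveI : IsProbabilityMeasure (κβ x) := hκβ.isProbabilityMeasure x
    have hrn : Kernel.rnDeriv κα κβ x =ᵐ[κβ x] (κα x).rnDeriv (κβ x) :=
      Kernel.rnDeriv_eq_rnDeriv_measure
    have hrnα : Kernel.rnDeriv κα κβ x =ᵐ[κα x] (κα x).rnDeriv (κβ x) := hax.ae_le hrn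
    have hlogeq : (fun y => Real.log (((κα x).rnDeriv (κβ x) y).toReal))
        =ᵐ[κα x] fun y => Real.log ((Kernel.rnDeriv κα κβ x y).toReal) :=
      hrnα.mono fun y hy => by dsimp only; rw [hy]
    have hintx : Integrable (fun y => Real.log (((κα x).rnDeriv (κβ x) y).toReal)) (κα x) :=
      hix.congr hlogeq.symm
    have hrelx : relEnt (κα x) (κβ x) = ((g x : ℝ) : EReal) := by
      rw [relEnt, if_pos ⟨hax, hintx⟩, hg]
      exact congrArg _ (integral_congr_ae hlogeq)
    have htal := htx (κα x) inferInstance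
    rw [hrelx, ← EReal.coe_mul] at htal
    have hwt : W2sq (κα x) (κβ x) ≠ ⊤ := by
      intro hwt
      rw [hwt, EReal.coe_ennreal_top, top_le_iff] at htal
      exact EReal.coe_ne_top _ htal
    have hcg : (0 : ℝ) ≤ C * g x := by
      have h0 : (0 : EReal) ≤ ((C * g x : ℝ) : EReal) :=
        le_trans (EReal.coe_ennreal_nonneg _) htal
      exact_mod_cast h0
    have hwle : W2sq (κα x) (κβ x) ≤ ENNReal.ofReal (C * g x) := by
      rw [← ENNReal.ofReal_toReal hwt] at htal ⊢
      rw [EReal.coe_ennreal_ofReal, max_eq_left ENNReal.toReal_nonneg] at htal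
      exact ENNReal.ofReal_le_ofReal (EReal.coe_le_coe_iff.mp htal)
    refine ⟨?_, hcg⟩
    calc ENNReal.ofReal (((∫ z, ξ z ∂κα x) - ∫ z, ξ z ∂κβ x) ^ 2)
        ≤ (K : ℝ≥0∞) ^ 2 * W2sq (κα x) (κβ x) := my_couple_bound (κα x) (κβ x) o hmα hmβ K ξ hξ
      _ ≤ (K : ℝ≥0∞) ^ 2 * ENNReal.ofReal (C * g x) := mul_le_mul_right hwle _
      _ = ENNReal.ofReal ((K : ℝ) ^ 2 * (C * g x)) := by
          conv_rhs => rw [ENNReal.ofReal_mul (sq_nonneg (K : ℝ))]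
          rw [ENNReal.ofReal_pow K.coe_nonneg, ENNReal.ofReal_coe_nnreal]
  -- integrate the pointwise bound
  have hgle0 : 0 ≤ᵐ[μ] fun x => (K : ℝ) ^ 2 * (C * g x) :=
    hpt.mono fun x hx => mul_nonneg (sq_nonneg _) hx.2
  have hinth : Integrable (fun x => (K : ℝ) ^ 2 * (C * g x)) μ :=
    (hgint.const_mul C).const_mul _
  have hlhs : ∫⁻ x, ENNReal.ofReal (((∫ z, ξ z ∂κα x) - ∫ z, ξ z ∂κβ x) ^ 2) ∂μ
      ≤ ∫⁻ x, ENNReal.ofReal ((K : ℝ) ^ 2 * (C * g x)) ∂μ :=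
    lintegral_mono_ae (hpt.mono fun x hx => hx.1)
  have heq : ∫⁻ x, ENNReal.ofReal ((K : ℝ) ^ 2 * (C * g x)) ∂μ
      = ENNReal.ofReal (∫ x, (K : ℝ) ^ 2 * (C * g x) ∂μ) :=
    (ofReal_integral_eq_lintegral_ofReal hinth hgle0).symm
  have hR0 : 0 ≤ ∫ x, (K : ℝ) ^ 2 * (C * g x) ∂μ := integral_nonneg_of_ae hgle0
  have hri : ∫ x, (K : ℝ) ^ 2 * (C * g x) ∂μ = (K : ℝ) ^ 2 * C * ∫ x, g x ∂μ := by
    simp_rw [← mul_assoc]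
    rw [integral_const_mul]
  calc ((∫⁻ x, ENNReal.ofReal (((∫ z, ξ z ∂κα x) - ∫ z, ξ z ∂κβ x) ^ 2) ∂μ : ℝ≥0∞) : EReal)
      ≤ ((ENNReal.ofReal (∫ x, (K : ℝ) ^ 2 * (C * g x) ∂μ) : ℝ≥0∞) : EReal) :=
        EReal.coe_ennreal_le_coe_ennreal_iff.mpr (hlhs.trans_eq heq)
    _ = ((∫ x, (K : ℝ) ^ 2 * (C * g x) ∂μ : ℝ) : EReal) := by
        rw [EReal.coe_ennreal_ofReal, max_eq_left hR0]
    _ = (((K : ℝ) ^ 2 * C : ℝ) : EReal) * relEnt α β := by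
        rw [hrel, hginteq, ← EReal.coe_mul, hri]
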